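/- Let G be a finite group of order p^α q^β with a cyclic Sylow p-subgroup P and a minimal normal Sylow q-subgroup Q satisfying C_G(Q) = Q. Then β equals the multiplicative order of q modulo p^α. -/

import Mathlib

open Polynomial in
theorem aux_card {q n : ℕ} [Fact q.Prime] (hq : q.Prime) (hn : 1 < n)
    {V : Type*} [AddCommGroup V] [Finite V] [Nontrivial V] [Module (ZMod q) V]
    (T : Module.End (ZMod q) V) (hT : orderOf T = n)
    (hsimp : ∀ W : Submodule (ZMod q) V, (∀ v ∈ W, T v ∈ W) → W = ⊥ ∨ W = ⊤) :
    Nat.card V = q ^ (orderOf (q : ZMod n)) := by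
  haveI : NeZero q := ⟨hq.pos.ne'⟩
  letI R := Algebra.adjoin (ZMod q) {T}
  letI : CommRing R := Algebra.adjoinCommRingOfComm (ZMod q) (by rintro a rfl b rfl; rfl)
  letI : Module R V := Subalgebra.moduleLeft _
  haveI : IsScalarTower (ZMod q) R V := Subalgebra.isScalarTower_mid _
  have hTR : T ∈ R := Algebra.self_mem_adjoin_singleton _ _
  have hTsmul : ∀ v : V, T v = (⟨T, hTR⟩ : R) • v := fun _ => rfl
  haveI : IsSimpleModule R V := by
    refine { eq_bot_or_eq_top := ?_ }
    intro W
    have := hsimp (W.restrictScalars (ZMod q)) (fun v hv => by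
      rw [Submodule.restrictScalars_mem] at hv ⊢
      rw [hTsmul v]; exact W.smul_mem _ hv)
    rcases this with h | h
    · left; rw [eq_bot_iff]; intro x hx
      have : x ∈ W.restrictScalars (ZMod q) := hx
      rw [h] at this; exact this
    · right; rw [eq_top_iff]; intro x _
      have : x ∈ W.restrictScalars (ZMod q) := by rw [h]; trivial
      exact this
  have hann : Module.annihilator R V = ⊥ := by
    rw [eq_bot_iff]
    intro r hr
    rw [Module.mem_annihilator] at hr
    have h0 : ∀ m : V, r • m = (0 : R) • m := fun m => by rw [hr m, zero_smul]
    exact Ideal.mem_bot.mpr (eq_of_smul_eq_smul h0)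
  haveI hmax : (⊥ : Ideal R).IsMaximal := hann ▸ IsSimpleModule.annihilator_isMaximal (R := R) (M := V)
  have hfield : IsField R := by
    by_contra hf
    exact absurd (Ideal.bot_lt_of_maximal ⊥ hf) (lt_irrefl _)
  letI : Field R := hfield.toField
  haveI : Finite (Module.End (ZMod q) V) :=
    Finite.of_injective (fun f => (f : V → V)) DFunLike.coe_injective
  letI : Fintype R := Fintype.ofFinite _
  letI : Fintype V := Fintype.ofFinite _
  have h1 : Module.finrank R V = 1 := isSimpleModule_iff_finrank_eq_one.mp inferInstance
  have hcardV : Fintype.card V = Fintype.card R := by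
    rw [Module.card_eq_pow_finrank (K := R) (V := V), h1, pow_one]
  set b := Module.finrank (ZMod q) V with hbdef
  have hb : Fintype.card V = q ^ b := by
    rw [Module.card_eq_pow_finrank (K := ZMod q) (V := V), ZMod.card]
  have hbpos : 0 < b := by
    rcases Nat.eq_zero_or_pos b with h | h
    · rw [h, pow_zero] at hb
      exact absurd hb (Fintype.one_lt_card).ne'
    · exact h
  set T' : R := (⟨T, hTR⟩ : R) with hT'def
  have hT'order : orderOf T' = n := by
    rw [← hT]
    exact (orderOf_injective (Subalgebra.val R).toRingHom.toMonoidHom Subtype.val_injective T').symm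
  have hT'n : T' ^ n = 1 := by rw [← hT'order]; exact pow_orderOf_eq_one T'
  have hT'ne : T' ≠ 0 := by
    have : IsUnit T' := IsUnit.of_mul_eq_one (T' ^ (n - 1)) (by
      rw [← pow_succ', Nat.sub_add_cancel (by omega : 1 ≤ n)]
      exact hT'n)
    exact this.ne_zero
  have hdvd1 : n ∣ Fintype.card R - 1 := by
    rw [← hT'order]
    exact orderOf_dvd_of_pow_eq_one (FiniteField.pow_card_sub_one_eq_one T' hT'ne)
  have hcR : Fintype.card R = q ^ b := by rw [← hcardV, hb]
  -- d ≤ b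
  set d := orderOf (q : ZMod n) with hddef
  have hq1 : (q : ZMod n) ^ b = 1 := by
    have h2 : ((q ^ b - 1 : ℕ) : ZMod n) = 0 := by
      rw [ZMod.natCast_eq_zero_iff]
      rw [hcR] at hdvd1; exact hdvd1
    rw [Nat.cast_sub (Nat.one_le_pow _ _ hq.pos)] at h2
    push_cast at h2
    rwa [sub_eq_zero] at h2
  have hdb : d ≤ b := orderOf_le_of_pow_eq_one hbpos hq1
  have hdpos : 0 < d := by
    rw [hddef, orderOf_pos_iff]
    exact isOfFinOrder_iff_pow_eq_one.mpr ⟨b, hbpos, hq1⟩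
  -- b ≤ d
  have hnd : n ∣ q ^ d - 1 := by
    have h3 : (q : ZMod n) ^ d = 1 := pow_orderOf_eq_one _
    rw [← ZMod.natCast_eq_zero_iff]
    rw [Nat.cast_sub (Nat.one_le_pow _ _ hq.pos)]
    push_cast
    rw [h3, sub_self]
  obtain ⟨k, hk⟩ := hnd
  have hqd : q ^ d = n * k + 1 := by
    have : 1 ≤ q ^ d := Nat.one_le_pow _ _ hq.pos
    omega
  have hTqd : T' ^ q ^ d = T' := by
    rw [hqd, pow_add, pow_one, pow_mul, hT'n, one_pow, one_mul]
  haveI : CharP R q := charP_of_injective_algebraMap (algebraMap (ZMod q) R).injective q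
  have hall : ∀ x : R, x ^ q ^ d = x := by
    intro x
    obtain ⟨x, hx⟩ := x
    refine Algebra.adjoin_induction (p := fun y hy => (⟨y, hy⟩ : R) ^ q ^ d = ⟨y, hy⟩) ?_ ?_ ?_ ?_ hx
    · intro y hy
      obtain rfl : y = T := hy
      exact hTqd
    · intro r
      show (algebraMap (ZMod q) R r) ^ q ^ d = algebraMap (ZMod q) R r
      rw [← map_pow, ZMod.pow_card_pow]
    · intro x y hx' hy' hx hy
      show ((⟨x, hx'⟩ : R) + ⟨y, hy'⟩) ^ q ^ d = ⟨x, hx'⟩ + ⟨y, hy'⟩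
      rw [add_pow_char_pow, hx, hy]
    · intro x y hx' hy' hx hy
      show ((⟨x, hx'⟩ : R) * ⟨y, hy'⟩) ^ q ^ d = ⟨x, hx'⟩ * ⟨y, hy'⟩
      rw [mul_pow, hx, hy]
  have hcard_le : Fintype.card R ≤ q ^ d := by
    classical
    set f : Polynomial R := X ^ (q ^ d) - X with hfdef
    have hdeg : f.natDegree = q ^ d := by
      have hlt : (X : R[X]).natDegree < ((X : R[X]) ^ (q ^ d)).natDegree := by
        rw [natDegree_X, natDegree_X_pow]
        exact Nat.one_lt_pow hdpos.ne' hq.one_lt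
      rw [hfdef, natDegree_sub_eq_left_of_natDegree_lt hlt, natDegree_X_pow]
    have hfne : f ≠ 0 := by
      intro h
      rw [h, natDegree_zero] at hdeg
      have := pow_pos hq.pos d
      omega
    have hroot : ∀ x : R, x ∈ f.roots := by
      intro x
      rw [mem_roots hfne]
      simp [IsRoot, hfdef, hall x]
    calc Fintype.card R = Finset.univ.card := (Finset.card_univ (α := R)).symm
      _ ≤ f.roots.toFinset.card :=
          Finset.card_le_card (fun x _ => Multiset.mem_toFinset.mpr (hroot x))
      _ ≤ Multiset.card f.roots := f.roots.toFinset_card_le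
      _ ≤ f.natDegree := f.card_roots'
      _ = q ^ d := hdeg
  have hbd : b ≤ d := by
    rw [hcR] at hcard_le
    exact (Nat.pow_le_pow_iff_right hq.one_lt).mp hcard_le
  have : b = d := le_antisymm hbd hdb
  rw [Nat.card_eq_fintype_card, hb, this]

theorem beta_eq_multiplicative_order {G : Type*} [Group G] [Finite G]
    {p q : ℕ} (hp : p.Prime) (hq : q.Prime) (hpq : p ≠ q)
    {α β : ℕ} (hα : 0 < α) (hβ : 0 < β)
    (hcard : Nat.card G = p ^ α * q ^ β)
    [Fact p.Prime] [Fact q.Prime]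
    (P : Sylow p G) (hP : IsCyclic (P : Subgroup G))
    (Q : Sylow q G) (hQn : (Q : Subgroup G).Normal)
    (hmin : (Q : Subgroup G) ≠ ⊥ ∧ ∀ N : Subgroup G, N.Normal → N ≤ Q → N ≠ ⊥ →
      N = (Q : Subgroup G))
    (hcent : Subgroup.centralizer ((Q : Subgroup G) : Set G) = (Q : Subgroup G)) :
    β = orderOf (q : ZMod (p ^ α)) := by
  classical
  set K : Subgroup G := (Q : Subgroup G) with hKdef
  haveI hKnormal : K.Normal := hQn
  -- cardinalities
  have hfact : ∀ r : ℕ, r.Prime → ∀ s : ℕ, s.Prime → ∀ a b : ℕ,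
      (r ^ a * s ^ b).factorization s = b + (if r = s then a else 0) := by
    intro r hr s hs a b
    rw [Nat.factorization_mul (pow_ne_zero _ hr.pos.ne') (pow_ne_zero _ hs.pos.ne'),
      hr.factorization_pow, hs.factorization_pow, Finsupp.add_apply,
      Finsupp.single_apply, Finsupp.single_apply, if_pos rfl]
    ring
  have hKcard : Nat.card K = q ^ β := by
    have := Q.card_eq_multiplicity
    rw [hcard, hfact p hp q hq α β, if_neg hpq] at this
    simpa using this
  have hPcard : Nat.card (P : Subgroup G) = p ^ α := by
    have := P.card_eq_multiplicity
    rw [hcard, mul_comm, hfact q hq p hp β α, if_neg (Ne.symm hpq)] at this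
    simpa using this
  haveI hKnt : Nontrivial K := (Subgroup.nontrivial_iff_ne_bot K).mpr hmin.1
  -- K is abelian
  have hcenter : Subgroup.center K = ⊤ := by
    haveI : Nontrivial (Subgroup.center K) := Q.isPGroup'.center_nontrivial
    set Z : Subgroup G := (Subgroup.center K).map K.subtype with hZdef
    have hZnormal : Z.Normal := by
      constructor
      rintro n hn c
      obtain ⟨z, hzmem, rfl⟩ := hn
      have h1 : c * (z : G) * c⁻¹ ∈ K := hKnormal.conj_mem _ z.2 c
      refine ⟨⟨c * z * c⁻¹, h1⟩, ?_, rfl⟩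
      rw [SetLike.mem_coe, Subgroup.mem_center_iff]
      intro k
      have hk' : c⁻¹ * (k : G) * c ∈ K := by
        have := hKnormal.conj_mem (k : G) k.2 c⁻¹
        simpa using this
      rw [SetLike.mem_coe] at hzmem
      have hcomm := (Subgroup.mem_center_iff.mp hzmem) ⟨_, hk'⟩
      have hcomm' : (c⁻¹ * (k : G) * c) * z = z * (c⁻¹ * k * c) :=
        congrArg Subtype.val hcomm
      apply Subtype.ext
      show (k : G) * (c * z * c⁻¹) = (c * z * c⁻¹) * k
      have h2 : c * ((c⁻¹ * (k : G) * c) * z) * c⁻¹ = c * ((z : G) * (c⁻¹ * k * c)) * c⁻¹ := by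
        rw [hcomm']
      simpa [mul_assoc] using h2
    have hZle : Z ≤ K := Subgroup.map_subtype_le _
    have hZbot : Z ≠ ⊥ := by
      intro h
      obtain ⟨z, hz⟩ := exists_ne (1 : Subgroup.center K)
      have hmem : ((z : K) : G) ∈ Z := ⟨z, z.2, rfl⟩
      rw [h, Subgroup.mem_bot] at hmem
      exact hz (by ext; exact hmem)
    have hZK : Z = K := hmin.2 Z hZnormal hZle hZbot
    apply Subgroup.map_injective K.subtype_injective
    rw [← hZdef, hZK, ← MonoidHom.range_eq_map, Subgroup.range_subtype]
  letI : CommGroup K := Group.commGroupOfCenterEqTop hcenter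
  have hcomm : ∀ x y : G, x ∈ K → y ∈ K → x * y = y * x := fun x y hx hy =>
    congrArg Subtype.val (mul_comm (⟨x, hx⟩ : K) ⟨y, hy⟩)
  -- K has exponent q
  have hexp : ∀ x : K, x ^ q = 1 := by
    letI : Fintype K := Fintype.ofFinite _
    obtain ⟨z, hz⟩ := exists_prime_orderOf_dvd_card (G := K) q
      (by rw [Fintype.card_eq_nat_card, hKcard]; exact dvd_pow_self q hβ.ne')
    set E : Subgroup G :=
      { carrier := {x | x ∈ K ∧ x ^ q = 1}
        one_mem' := ⟨K.one_mem, one_pow q⟩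
        mul_mem' := by
          rintro a b ⟨haK, ha⟩ ⟨hbK, hb⟩
          refine ⟨K.mul_mem haK hbK, ?_⟩
          rw [(Commute.mul_pow (hcomm a b haK hbK)), ha, hb, one_mul]
        inv_mem' := by
          rintro a ⟨haK, ha⟩
          exact ⟨K.inv_mem haK, by rw [inv_pow, ha, inv_one]⟩ } with hEdef
    have hEnormal : E.Normal := by
      constructor
      rintro a ⟨haK, ha⟩ c
      exact ⟨hKnormal.conj_mem a haK c, by rw [conj_pow, ha, mul_one, mul_inv_cancel]⟩
    have hE : E = K := by
      apply hmin.2 E hEnormal (fun x hx => hx.1)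
      intro h
      have hzE : (z : G) ∈ E := by
        refine ⟨z.2, ?_⟩
        have : z ^ q = 1 := by rw [← hz]; exact pow_orderOf_eq_one z
        exact_mod_cast congrArg Subtype.val this
      rw [h, Subgroup.mem_bot] at hzE
      have : z = 1 := Subtype.ext hzE
      rw [this, orderOf_one] at hz
      exact hq.one_lt.ne hz
    intro x
    have hx : (x : G) ∈ E := by rw [hE]; exact x.2
    exact Subtype.ext (by push_cast; exact hx.2)
  haveI : Module (ZMod q) (Additive K) := AddCommGroup.zmodModule (by
    intro x
    show q • x = 0
    rw [show x = Additive.ofMul x.toMul from rfl, ← ofMul_pow, hexp x.toMul]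
    simp)
  haveI : Nontrivial (Additive K) := ‹Nontrivial K›
  -- generator of P
  obtain ⟨g₀, hg₀⟩ := hP.exists_generator
  set g : G := (g₀ : G) with hgdef
  have hgP : g ∈ (P : Subgroup G) := g₀.2
  have hgorder : orderOf g = p ^ α := by
    rw [Subgroup.orderOf_coe, orderOf_eq_card_of_forall_mem_zpowers hg₀, hPcard]
  have hgpow : g ^ (p ^ α) = 1 := by rw [← hgorder]; exact pow_orderOf_eq_one g
  -- conjugation endomorphism
  set φ : MulAut K := MulAut.conjNormal g with hφdef
  set f : Additive K →+ Additive K :=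
    AddMonoidHom.mk' (fun v => Additive.ofMul (φ v.toMul))
      (fun a b => congrArg Additive.ofMul (map_mul φ _ _)) with hfdef
  set T : Module.End (ZMod q) (Additive K) := f.toZModLinearMap q with hTdef
  have hTapp : ∀ v : Additive K, T v = Additive.ofMul (φ v.toMul) := fun _ => rfl
  have hTk : ∀ (k : ℕ) (v : Additive K), (T ^ k) v = Additive.ofMul ((φ ^ k) v.toMul) := by
    intro k
    induction k with
    | zero => intro v; rfl
    | succ k ih =>
      intro v
      rw [pow_succ, Module.End.mul_apply, hTapp, ih, pow_succ]
      rfl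
  have hφk : ∀ (k : ℕ) (x : K), (((φ ^ k) x : K) : G) = g ^ k * x * (g ^ k)⁻¹ := by
    intro k x
    rw [hφdef, ← map_pow]
    exact MulAut.conjNormal_apply (g ^ k) x
  -- P ⊓ K = ⊥
  have hPK_bot : (P : Subgroup G) ⊓ K = ⊥ := by
    have h1 : Nat.card (↥((P : Subgroup G) ⊓ K)) ∣ p ^ α :=
      hPcard ▸ Subgroup.card_dvd_of_le inf_le_left
    have h2 : Nat.card (↥((P : Subgroup G) ⊓ K)) ∣ q ^ β :=
      hKcard ▸ Subgroup.card_dvd_of_le inf_le_right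
    have hco : Nat.Coprime (p ^ α) (q ^ β) :=
      Nat.Coprime.pow α β ((Nat.coprime_primes hp hq).mpr hpq)
    exact Subgroup.eq_bot_of_card_eq _ (Nat.dvd_one.mp (hco ▸ Nat.dvd_gcd h1 h2))
  -- order of T
  have hT1 : T ^ (p ^ α) = 1 := by
    apply LinearMap.ext
    intro v
    rw [hTk]
    have : (φ ^ (p ^ α)) v.toMul = v.toMul := by
      apply Subtype.ext
      rw [hφk, hgpow]
      simp
    rw [this]
    rfl
  have hTorder : orderOf T = p ^ α := by
    apply Nat.dvd_antisymm (orderOf_dvd_of_pow_eq_one hT1)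
    have hm : ∀ m : ℕ, T ^ m = 1 → p ^ α ∣ m := by
      intro m hm
      have hgm : g ^ m ∈ Subgroup.centralizer (K : Set G) := by
        rw [Subgroup.mem_centralizer_iff]
        intro h hh
        have h1 := congrArg (fun (e : Module.End (ZMod q) (Additive K)) =>
          e (Additive.ofMul (⟨h, hh⟩ : K))) hm
        simp only [Module.End.one_apply] at h1
        rw [hTk] at h1
        have h2 : (((φ ^ m) (⟨h, hh⟩ : K) : K) : G) = h := by
          have := congrArg (fun v : Additive K => ((v.toMul : K) : G)) h1
          simpa using this
        rw [hφk] at h2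
        have h3 : g ^ m * h * (g ^ m)⁻¹ = h := h2
        calc h * g ^ m = (g ^ m * h * (g ^ m)⁻¹) * g ^ m := by rw [h3]
          _ = g ^ m * h := by group
      rw [hcent] at hgm
      have hmem : g ^ m ∈ (P : Subgroup G) ⊓ K := ⟨(P : Subgroup G).pow_mem hgP m, hgm⟩
      rw [hPK_bot, Subgroup.mem_bot] at hmem
      exact hgorder ▸ orderOf_dvd_of_pow_eq_one hmem
    exact hm _ (pow_orderOf_eq_one T)
  -- K ⊔ P = ⊤
  have hco : Nat.Coprime (p ^ α) (q ^ β) := Nat.Coprime.pow α β ((Nat.coprime_primes hp hq).mpr hpq)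
  have hsup : K ⊔ (P : Subgroup G) = ⊤ := by
    apply Subgroup.eq_top_of_card_eq
    have h1 : q ^ β ∣ Nat.card (↥(K ⊔ (P : Subgroup G))) :=
      hKcard ▸ Subgroup.card_dvd_of_le le_sup_left
    have h2 : p ^ α ∣ Nat.card (↥(K ⊔ (P : Subgroup G))) :=
      hPcard ▸ Subgroup.card_dvd_of_le le_sup_right
    have h3 : Nat.card (↥(K ⊔ (P : Subgroup G))) ∣ Nat.card G :=
      Subgroup.card_subgroup_dvd_card _
    rw [hcard]
    rw [hcard] at h3
    exact Nat.dvd_antisymm h3 (Nat.Coprime.mul_dvd_of_dvd_of_dvd hco h2 h1)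
  -- simplicity
  have hsimp : ∀ W : Submodule (ZMod q) (Additive K), (∀ v ∈ W, T v ∈ W) → W = ⊥ ∨ W = ⊤ := by
    intro W hW
    have hWk : ∀ (k : ℕ) (v : Additive K), v ∈ W → (T ^ k) v ∈ W := by
      intro k
      induction k with
      | zero => intro v hv; simpa using hv
      | succ k ih =>
        intro v hv
        rw [pow_succ, Module.End.mul_apply]
        exact ih _ (hW v hv)
    set N : Subgroup G := (AddSubgroup.toSubgroup' ((AddSubgroup.toZModSubmodule q).symm W)).map
      K.subtype with hNdef
    have hNmem : ∀ x : G, x ∈ N ↔ ∃ hx : x ∈ K, Additive.ofMul (⟨x, hx⟩ : K) ∈ W := by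
      intro x
      constructor
      · rintro ⟨y, hy, rfl⟩
        exact ⟨y.2, hy⟩
      · rintro ⟨hx, hw⟩
        exact ⟨⟨x, hx⟩, hw, rfl⟩
    have hNK : N ≤ K := Subgroup.map_subtype_le _
    have hconj : ∀ (m : ℕ) (x : G), x ∈ N → g ^ m * x * (g ^ m)⁻¹ ∈ N := by
      intro m x hx
      rw [hNmem] at hx ⊢
      obtain ⟨hxK, hw⟩ := hx
      refine ⟨by simpa using hKnormal.conj_mem x hxK (g ^ m), ?_⟩
      have he : (⟨g ^ m * x * (g ^ m)⁻¹, by simpa using hKnormal.conj_mem x hxK (g ^ m)⟩ : K)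
          = (φ ^ m) ⟨x, hxK⟩ := by
        apply Subtype.ext
        rw [hφk]
      rw [he]
      have := hWk m (Additive.ofMul (⟨x, hxK⟩ : K)) hw
      rw [hTk] at this
      exact this
    have hgnorm : g ∈ Subgroup.normalizer (N : Set G) := by
      rw [Subgroup.mem_normalizer_iff]
      intro h
      constructor
      · intro hh
        simpa using hconj 1 h hh
      · intro hh
        have h2 := hconj (p ^ α - 1) _ hh
        have h3 : g ^ (p ^ α - 1) * (g * h * g⁻¹) * (g ^ (p ^ α - 1))⁻¹ = h := by
          have hcancel : g ^ (p ^ α - 1) * g = 1 := by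
            rw [← pow_succ, Nat.sub_add_cancel (Nat.one_le_pow _ _ hp.pos), hgpow]
          calc g ^ (p ^ α - 1) * (g * h * g⁻¹) * (g ^ (p ^ α - 1))⁻¹
              = (g ^ (p ^ α - 1) * g) * h * ((g ^ (p ^ α - 1)) * g)⁻¹ := by group
            _ = h := by rw [hcancel]; group
        rwa [h3] at h2
    have hKnorm : K ≤ Subgroup.normalizer (N : Set G) := by
      intro c hc
      rw [Subgroup.mem_normalizer_iff]
      intro h
      constructor
      · intro hh
        have hhK : h ∈ K := hNK hh
        rw [hcomm c h hc hhK, mul_assoc, mul_inv_cancel, mul_one]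
        exact hh
      · intro hh
        have hK2 : c * h * c⁻¹ ∈ K := hNK hh
        have hhK : h ∈ K := by
          have := K.mul_mem (K.mul_mem (K.inv_mem hc) hK2) hc
          simpa [mul_assoc] using this
        rwa [hcomm c h hc hhK, mul_assoc, mul_inv_cancel, mul_one] at hh
    have hNnormal : N.Normal := by
      rw [← Subgroup.normalizer_eq_top_iff]
      rw [eq_top_iff, ← hsup]
      apply sup_le hKnorm
      intro c hcP
      obtain ⟨k, hk⟩ := hg₀ ⟨c, hcP⟩
      have hc : c ∈ Subgroup.zpowers g := by
        refine ⟨k, ?_⟩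
        have := congrArg (Subtype.val : ((P : Subgroup G) : Subgroup G) → G) hk
        simpa [hgdef] using this
      exact Subgroup.zpowers_le.mpr hgnorm hc
    by_cases hN : N = ⊥
    · left
      rw [eq_bot_iff]
      intro v hv
      have hvN : ((v.toMul : K) : G) ∈ N := (hNmem _).mpr ⟨(v.toMul : K).2, by simpa using hv⟩
      rw [hN, Subgroup.mem_bot] at hvN
      have : v.toMul = 1 := Subtype.ext hvN
      simp only [Submodule.mem_bot]
      rw [← ofMul_toMul v, this]
      rfl
    · right
      have hNK' : N = K := hmin.2 N hNnormal hNK hN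
      rw [eq_top_iff]
      intro v _
      have hvN : ((v.toMul : K) : G) ∈ N := by rw [hNK']; exact (v.toMul : K).2
      obtain ⟨hx, hw⟩ := (hNmem _).mp hvN
      have : (⟨((v.toMul : K) : G), hx⟩ : K) = v.toMul := Subtype.ext rfl
      rw [this] at hw
      simpa using hw
  -- conclude
  have hmain := aux_card hq (Nat.one_lt_pow hα.ne' hp.one_lt) T hTorder hsimp
  have hcardadd : Nat.card (Additive K) = q ^ β := by
    rw [Nat.card_congr (Additive.toMul (α := K)), hKcard]
  rw [hcardadd] at hmain
  exact Nat.pow_right_injective hq.two_le hmain
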